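/- The matrix A_q = γ_q DT_q^{-1} DT_q^{-T} is symmetric and positive definite at every point of Ω₀, and its minimal eigenvalue is bounded below by λ̄ = 2(1 + (1+(d₁+d₂)²)/ε + √((1 + (1+(d₁+d₂)²)/ε)² - 4))^{-1} > 0, where d₁, d₂ are bounds with ‖q''‖_{L^∞(I)} ≤ d₁ and |q'(0)| ≤ d₂ (so that ‖q'‖_∞ ≤ d₁ + d₂) and q ≤ 1 - ε. -/

import Mathlib

open Set Matrix

set_option maxHeartbeats 1000000 in
/-- The matrix `A_q = γ_q DT_q⁻¹ DT_q⁻ᵀ` is symmetric and positive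
definite at every point of `Ω₀`, with minimal eigenvalue bounded below by
`λ̄ = 2(1 + (1+(d₁+d₂)²)/ε + √((1 + (1+(d₁+d₂)²)/ε)² - 4))⁻¹ > 0`, where
`‖q''‖_∞ ≤ d₁`, `|q'(0)| ≤ d₂` (so `‖q'‖_∞ ≤ d₁ + d₂`) and `q ≤ 1 - ε`. -/
theorem Aq_symm_posdef_eigen_bound (ε : ℝ) (hε : ε ∈ Ioo (0 : ℝ) 1)
    (d₁ d₂ : ℝ) (hd₁ : 0 ≤ d₁) (hd₂ : 0 ≤ d₂)
    (q : ℝ → ℝ) (hq2 : ContDiff ℝ 2 q)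
    (hq0 : q 0 = 0) (hq1 : q 1 = 0)
    (hq : ∀ x ∈ Ioo (0 : ℝ) 1, q x ≤ 1 - ε)
    (hq'' : ∀ x ∈ Ioo (0 : ℝ) 1, |deriv (deriv q) x| ≤ d₁)
    (hq'0 : |deriv q 0| ≤ d₂) :
    0 < 2 * (1 + (1 + (d₁ + d₂) ^ 2) / ε +
        Real.sqrt ((1 + (1 + (d₁ + d₂) ^ 2) / ε) ^ 2 - 4))⁻¹ ∧
    ∀ x ∈ Ioo (0 : ℝ) 1, ∀ y ∈ Ioo (0 : ℝ) 1,
      let DT : Matrix (Fin 2) (Fin 2) ℝ :=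
        !![(1 : ℝ), 0; (1 - y) * deriv q x, 1 - q x]
      let A : Matrix (Fin 2) (Fin 2) ℝ := DT.det • (DT⁻¹ * (DT⁻¹)ᵀ)
      Aᵀ = A ∧
      (∀ v : Fin 2 → ℝ, v ≠ 0 → 0 < v ⬝ᵥ A.mulVec v) ∧
      (∀ v : Fin 2 → ℝ,
        v ⬝ᵥ A.mulVec v ≥
          2 * (1 + (1 + (d₁ + d₂) ^ 2) / ε +
            Real.sqrt ((1 + (1 + (d₁ + d₂) ^ 2) / ε) ^ 2 - 4))⁻¹ * (v ⬝ᵥ v)) := by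
  obtain ⟨hε0, hε1⟩ := hε
  have hD2 : (0:ℝ) ≤ (d₁ + d₂) ^ 2 := sq_nonneg _
  set M : ℝ := 1 + (1 + (d₁ + d₂) ^ 2) / ε with hMdef
  set R : ℝ := Real.sqrt (M ^ 2 - 4) with hRdef
  set L : ℝ := 2 * (M + R)⁻¹ with hLdef
  clear_value L R M
  have hM1 : 1 + 1 / ε ≤ M := by
    have h : 1 / ε ≤ (1 + (d₁ + d₂) ^ 2) / ε :=
      (div_le_div_iff_of_pos_right hε0).mpr (by linarith)
    rw [hMdef]; linarith
  have h2M : 2 < M := by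
    have h1 : 1 < 1 / ε := one_lt_one_div hε0 hε1
    linarith
  have hR2 : R ^ 2 = M ^ 2 - 4 := by
    rw [hRdef]; exact Real.sq_sqrt (by nlinarith)
  have hR0 : 0 ≤ R := by rw [hRdef]; exact Real.sqrt_nonneg _
  have hMR : 0 < M + R := by linarith
  have hL0 : 0 < L := by
    rw [hLdef]; exact mul_pos two_pos (inv_pos.2 hMR)
  have hLMR : L * (M + R) = 2 := by
    rw [hLdef]; field_simp
  have hLval : 2 * L = M - R := by
    have h0 : (2 * L - (M - R)) * (M + R) = 0 := by linear_combination 2 * hLMR + hR2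
    rcases mul_eq_zero.mp h0 with h | h
    · linarith
    · linarith
  have hLroot : L ^ 2 - M * L + 1 = 0 := by
    linear_combination ((2 * L - M - R) / 4) * hLval + (1 / 4) * hR2
  have hLε : L < ε := by
    have key : M - 2 * ε < R := by
      rcases le_or_gt (M - 2 * ε) 0 with h | h
      · have hRpos : 0 < R := by nlinarith
        linarith
      · have hlt : (M - 2 * ε) ^ 2 < M ^ 2 - 4 := by
          have hεM : ε * M ≥ ε + 1 := by
            have h2 := mul_le_mul_of_nonneg_left hM1 hε0.le
            have hεε : ε * (1 / ε) = 1 := by field_simp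
            nlinarith
          nlinarith [mul_pos hε0 (sub_pos.2 hε1)]
        nlinarith [hR2, hR0]
    linarith
  -- analytic facts about q
  have hqd : Differentiable ℝ q := hq2.differentiable (by norm_num)
  have h1 : ContDiff ℝ 1 (deriv q) := by
    have h21 : ContDiff ℝ ((1 : ℕ) + 1) q := by exact_mod_cast hq2
    exact ((contDiff_succ_iff_deriv (n := 1) (f := q)).mp (by exact_mod_cast h21)).2.2
  have hqd' : Differentiable ℝ (deriv q) := h1.differentiable (by norm_num)
  have hqc'' : Continuous (deriv (deriv q)) := h1.continuous_deriv le_rfl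
  have hq''I : ∀ u ∈ Icc (0:ℝ) 1, ‖deriv (deriv q) u‖ ≤ d₁ := by
    have hsub : closure (Ioo (0:ℝ) 1) ⊆ {u | ‖deriv (deriv q) u‖ ≤ d₁} :=
      closure_minimal (fun z hz => by simpa [Real.norm_eq_abs] using hq'' z hz)
        (isClosed_le hqc''.norm continuous_const)
    intro u hu
    exact hsub (by rw [closure_Ioo (by norm_num : (0:ℝ) ≠ 1)]; exact hu)
  have hq'bd : ∀ u ∈ Icc (0:ℝ) 1, |deriv q u| ≤ d₂ + d₁ * u := by
    intro u hu
    have h := Convex.norm_image_sub_le_of_norm_deriv_le (f := deriv q) (s := Icc (0:ℝ) 1)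
      (fun z _ => hqd' z) hq''I (convex_Icc 0 1) ⟨le_rfl, zero_le_one⟩ hu
    rw [Real.norm_eq_abs, Real.norm_eq_abs, sub_zero, abs_of_nonneg hu.1] at h
    calc |deriv q u| = |deriv q 0 + (deriv q u - deriv q 0)| := by congr 1; ring
      _ ≤ |deriv q 0| + |deriv q u - deriv q 0| := abs_add_le _ _
      _ ≤ d₂ + d₁ * u := add_le_add hq'0 h
  obtain ⟨ξ, hξI, hξ0⟩ := exists_deriv_eq_zero (f := q) zero_lt_one
    hq2.continuous.continuousOn (hq0.trans hq1.symm)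
  have hq'le : ∀ u ∈ Icc (0:ℝ) 1, ‖deriv q u‖ ≤ d₁ := by
    intro u hu
    have h := Convex.norm_image_sub_le_of_norm_deriv_le (f := deriv q) (s := Icc (0:ℝ) 1)
      (fun z _ => hqd' z) hq''I (convex_Icc 0 1) (Ioo_subset_Icc_self hξI) hu
    rw [hξ0, sub_zero] at h
    have habs : ‖u - ξ‖ ≤ 1 := by
      rw [Real.norm_eq_abs, abs_le]
      constructor
      · linarith [hu.1, hξI.2.le]
      · linarith [hu.2, hξI.1.le]
    calc ‖deriv q u‖ ≤ d₁ * ‖u - ξ‖ := h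
      _ ≤ d₁ * 1 := mul_le_mul_of_nonneg_left habs hd₁
      _ = d₁ := mul_one d₁
  have hqbd : ∀ u ∈ Icc (0:ℝ) 1, |q u| ≤ d₁ * u ∧ |q u| ≤ d₁ * (1 - u) := by
    intro u hu
    constructor
    · have h := Convex.norm_image_sub_le_of_norm_deriv_le (f := q) (s := Icc (0:ℝ) 1)
        (fun z _ => hqd z) hq'le (convex_Icc 0 1) ⟨le_rfl, zero_le_one⟩ hu
      rw [hq0, sub_zero, Real.norm_eq_abs, Real.norm_eq_abs, sub_zero,
        abs_of_nonneg hu.1] at h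
      exact h
    · have h := Convex.norm_image_sub_le_of_norm_deriv_le (f := q) (s := Icc (0:ℝ) 1)
        (fun z _ => hqd z) hq'le (convex_Icc 0 1) ⟨zero_le_one, le_rfl⟩ hu
      rw [hq1, sub_zero, Real.norm_eq_abs, Real.norm_eq_abs,
        abs_of_nonpos (by linarith [hu.2] : u - 1 ≤ 0)] at h
      calc |q u| ≤ d₁ * -(u - 1) := h
        _ = d₁ * (1 - u) := by ring
  refine ⟨hL0, ?_⟩
  intro x hx y hy
  set c : ℝ := 1 - q x with hcdef
  set b : ℝ := (1 - y) * deriv q x with hbdef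
  clear_value b c
  have hxI : x ∈ Icc (0:ℝ) 1 := ⟨hx.1.le, hx.2.le⟩
  have hcε : ε ≤ c := by
    have := hq x hx
    rw [hcdef]; linarith
  have hc0 : 0 < c := lt_of_lt_of_le hε0 hcε
  have hcne : c ≠ 0 := ne_of_gt hc0
  -- bounds at the point x
  have hp : |deriv q x| ≤ d₂ + d₁ * x := hq'bd x hxI
  obtain ⟨hsx, hsx'⟩ := hqbd x hxI
  have hb2 : b ^ 2 ≤ (deriv q x) ^ 2 := by
    have h1 : (1 - y) ^ 2 ≤ 1 := by nlinarith [hy.1, hy.2]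
    calc b ^ 2 = (1 - y) ^ 2 * (deriv q x) ^ 2 := by rw [hbdef]; ring
      _ ≤ 1 * (deriv q x) ^ 2 := mul_le_mul_of_nonneg_right h1 (sq_nonneg _)
      _ = (deriv q x) ^ 2 := one_mul _
  have hp2 : (deriv q x) ^ 2 ≤ (d₂ + d₁ * x) ^ 2 :=
    sq_le_sq' (abs_le.mp hp).1 (abs_le.mp hp).2
  have hs2 : (q x) ^ 2 ≤ (d₁ * x) * (d₁ * (1 - x)) := by
    nlinarith [abs_nonneg (q x), sq_abs (q x),
      mul_le_mul hsx hsx' (abs_nonneg (q x)) (mul_nonneg hd₁ hx.1.le)]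
  have hsp : (q x) ^ 2 + (deriv q x) ^ 2 ≤ (d₁ + d₂) ^ 2 := by
    nlinarith [hx.1.le, hx.2.le, mul_nonneg hd₁ hd₂, mul_nonneg (mul_nonneg hd₁ hd₁) hx.1.le,
      mul_nonneg (mul_nonneg hd₁ hd₂) hx.1.le]
  have hsb : (q x) ^ 2 + b ^ 2 ≤ (d₁ + d₂) ^ 2 := by linarith
  have hkey : (c ^ 2 + (1 + b ^ 2)) * ε ≤ (ε + (1 + (d₁ + d₂) ^ 2)) * c := by
    rw [hcdef]
    rcases le_or_gt 0 (-(q x)) with hs | hs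
    · nlinarith [hsb, hε1.le, hε0.le,
        mul_nonneg (sub_nonneg.2 hε1.le) (add_nonneg (sq_nonneg (q x)) (sq_nonneg b)),
        mul_nonneg hs (by linarith : (0:ℝ) ≤ 1 + (d₁ + d₂) ^ 2)]
    · have huε : q x ≤ 1 - ε := by rw [hcdef] at hcε; linarith
      nlinarith [hsb, hε1.le, hε0.le,
        mul_nonneg hε0.le (by linarith : (0:ℝ) ≤ (d₁ + d₂) ^ 2 - (q x) ^ 2 - b ^ 2),
        mul_nonneg hD2 (by linarith : (0:ℝ) ≤ 1 - q x - ε)]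
  have htM : c + (1 + b ^ 2) / c ≤ M := by
    have e1 : c + (1 + b ^ 2) / c = (c ^ 2 + (1 + b ^ 2)) / c := by
      field_simp
    have e2 : M = (ε + (1 + (d₁ + d₂) ^ 2)) / ε := by
      rw [hMdef]; field_simp
    rw [e1, e2]
    exact (div_le_div_iff₀ hc0 hε0).mpr hkey
  have hαpos : 0 < c - L := by linarith
  have hαβ : (c - L) * ((b ^ 2 + 1) / c - L) - b ^ 2 ≥ 0 := by
    have h2 : L * (c + (1 + b ^ 2) / c) ≤ L * M := mul_le_mul_of_nonneg_left htM hL0.le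
    have expand : (c - L) * ((b ^ 2 + 1) / c - L) - b ^ 2
        = 1 + L ^ 2 - L * (c + (1 + b ^ 2) / c) := by
      field_simp; ring
    rw [expand]
    nlinarith [hLroot]
  -- explicit form of A
  intro DT A
  have hdet : DT.det = c := by simp [DT, Matrix.det_fin_two_of]
  have hinv : DT⁻¹ = !![1, 0; -b / c, 1 / c] := by
    apply Matrix.inv_eq_right_inv
    ext i j
    fin_cases i <;> fin_cases j <;>
      simp [DT, Matrix.mul_apply, Fin.sum_univ_two] <;> field_simp <;> ring
  have hinvT : (DT⁻¹)ᵀ = !![1, -b / c; 0, 1 / c] := by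
    rw [hinv]
    ext i j
    fin_cases i <;> fin_cases j <;> simp
  have hprod : DT⁻¹ * (DT⁻¹)ᵀ =
      !![1, -b / c; -b / c, (-b / c) * (-b / c) + (1 / c) * (1 / c)] := by
    rw [hinvT, hinv, Matrix.mul_fin_two]
    norm_num
  have hA : A = !![c, -b; -b, (b ^ 2 + 1) / c] := by
    show DT.det • (DT⁻¹ * (DT⁻¹)ᵀ) = _
    rw [hdet, hprod]
    ext i j
    fin_cases i <;> fin_cases j <;>
      simp [Matrix.smul_apply, smul_eq_mul] <;> field_simp <;> ring
  clear_value A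
  clear hdet hinv hinvT hprod
  have hsymm : Aᵀ = A := by
    rw [hA]
    ext i j
    fin_cases i <;> fin_cases j <;> simp
  have hquad : ∀ v : Fin 2 → ℝ,
      v ⬝ᵥ A.mulVec v =
        c * (v 0) ^ 2 - 2 * b * (v 0) * (v 1) + ((b ^ 2 + 1) / c) * (v 1) ^ 2 := by
    intro v
    rw [hA]
    simp [Matrix.mulVec, dotProduct, Fin.sum_univ_two]
    ring
  have hvv : ∀ v : Fin 2 → ℝ, v ⬝ᵥ v = (v 0) ^ 2 + (v 1) ^ 2 := by
    intro v
    simp [dotProduct, Fin.sum_univ_two]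
    ring
  have hbound : ∀ v : Fin 2 → ℝ, v ⬝ᵥ A.mulVec v ≥ L * (v ⬝ᵥ v) := by
    intro v
    rw [hquad v, hvv v, ge_iff_le, ← sub_nonneg]
    have h2 : 0 ≤ ((c - L) * ((b ^ 2 + 1) / c - L) - b ^ 2) * (v 1) ^ 2 :=
      mul_nonneg hαβ.le (sq_nonneg _)
    have exp : (c - L) * (c * (v 0) ^ 2 - 2 * b * (v 0) * (v 1)
          + ((b ^ 2 + 1) / c) * (v 1) ^ 2 - L * ((v 0) ^ 2 + (v 1) ^ 2))
        = ((c - L) * v 0 - b * v 1) ^ 2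
          + ((c - L) * ((b ^ 2 + 1) / c - L) - b ^ 2) * (v 1) ^ 2 := by
      field_simp
      ring
    have h3 : 0 ≤ (c - L) * (c * (v 0) ^ 2 - 2 * b * (v 0) * (v 1)
        + ((b ^ 2 + 1) / c) * (v 1) ^ 2 - L * ((v 0) ^ 2 + (v 1) ^ 2)) := by
      rw [exp]; exact add_nonneg (sq_nonneg _) h2
    have h4 := div_nonneg h3 hαpos.le
    rwa [mul_div_cancel_left₀ _ (ne_of_gt hαpos)] at h4
  refine ⟨hsymm, ?_, hbound⟩
  · intro v hv
    have hvpos : 0 < v ⬝ᵥ v := by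
      have hnn : 0 ≤ v ⬝ᵥ v := by
        rw [hvv v]
        exact add_nonneg (sq_nonneg _) (sq_nonneg _)
      rcases hnn.lt_or_eq with h | h
      · exact h
      · exact absurd (dotProduct_self_eq_zero.mp h.symm) hv
    calc (0:ℝ) < L * (v ⬝ᵥ v) := mul_pos hL0 hvpos
      _ ≤ v ⬝ᵥ A.mulVec v := hbound v
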